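/- Let n ≥ 1, s ∈ (0,1), let Ω ⊂ ℝⁿ be a bounded open set that is strictly star-shaped with respect to the origin, in the sense that (1/λ)·Ω ⊆ Ω for every λ > 1, and assume there is a constant C₁ > 0 such that the Lebesgue measure of (λ·Ω) \ Ω is at most C₁(λ−1) for every λ ∈ (1, 2). Let v : ℝⁿ → ℝ satisfy: v ≡ 0 on ℝⁿ \ Ω; v is s-Hölder continuous on ℝⁿ, i.e. |v(x) − v(y)| ≤ C₂|x−y|^s for some C₂ > 0 and all x, y ∈ ℝⁿ; v is differentiable at every point of Ω with |∇v(x)| ≤ C₃·δ(x)^{s−1} for all x ∈ Ω, where δ(x) = dist(x, ∂Ω); and ∫_Ω δ(x)^{s−1} dx < ∞. Let g : Ω → ℝ be bounded and continuous. Then the map λ ↦ ∫_Ω v(λx)·g(x) dx has one-sided (right) derivative at λ = 1 equal to ∫_Ω (x·∇v(x))·g(x) dx. -/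

import Mathlib

set_option maxHeartbeats 1000000


open Real Set MeasureTheory Filter Topology Pointwise
open scoped RealInnerProductSpace

/-- The identity `(d/dλ)|_{λ=1⁺} ∫_Ω v(λx) g(x) dx = ∫_Ω (x·∇v(x)) g(x) dx` from the
proof of Theorem 1.1, for a bounded open strictly star-shaped domain `Ω`, a function `v`
vanishing outside `Ω`, `s`-Hölder continuous on `ℝⁿ`, differentiable in `Ω` with
`|∇v| ≤ C₃ δ^{s-1}`, `δ^{s-1}` integrable on `Ω`, and `g` bounded and continuous on `Ω`. -/
theorem stmt_10 (n : ℕ) (hn : 1 ≤ n) (s : ℝ) (hs : s ∈ Ioo (0:ℝ) 1)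
    (Ω : Set (EuclideanSpace ℝ (Fin n))) (hΩo : IsOpen Ω) (hΩb : Bornology.IsBounded Ω)
    (hstar : ∀ lam : ℝ, 1 < lam → lam⁻¹ • Ω ⊆ Ω)
    (C₁ : ℝ) (hC₁ : 0 < C₁)
    (hmeas : ∀ lam ∈ Ioo (1:ℝ) 2, volume ((lam • Ω) \ Ω) ≤ ENNReal.ofReal (C₁ * (lam - 1)))
    (v : EuclideanSpace ℝ (Fin n) → ℝ) (hv0 : ∀ x, x ∉ Ω → v x = 0)
    (C₂ : ℝ) (hC₂ : 0 < C₂) (hvH : ∀ x y, |v x - v y| ≤ C₂ * ‖x - y‖ ^ s)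
    (hvd : ∀ x ∈ Ω, DifferentiableAt ℝ v x)
    (C₃ : ℝ) (hC₃ : 0 < C₃)
    (hgrad : ∀ x ∈ Ω, ‖gradient v x‖ ≤ C₃ * Metric.infDist x (frontier Ω) ^ (s - 1))
    (hδ : IntegrableOn (fun x => Metric.infDist x (frontier Ω) ^ (s - 1)) Ω volume)
    (g : EuclideanSpace ℝ (Fin n) → ℝ) (hgc : ContinuousOn g Ω)
    (M : ℝ) (hgb : ∀ x ∈ Ω, |g x| ≤ M) :
    HasDerivWithinAt (fun lam : ℝ => ∫ x in Ω, v (lam • x) * g x)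
      (∫ x in Ω, ⟪x, gradient v x⟫ * g x) (Ioi (1:ℝ)) 1 := by
  obtain ⟨hs0, hs1⟩ := hs
  -- trivial case: Ω empty
  rcases Set.eq_empty_or_nonempty Ω with rfl | hΩne
  · simp only [Measure.restrict_empty, integral_zero_measure]
    exact (hasDerivAt_const (1:ℝ) (0:ℝ)).hasDerivWithinAt
  haveI : Nonempty (Fin n) := Fin.pos_iff_nonempty.mp hn
  -- Ω is not the whole space
  have hΩu : Ω ≠ univ := by
    intro h
    obtain ⟨R, hR⟩ := hΩb.subset_closedBall 0
    obtain ⟨x, hx⟩ := NormedSpace.exists_lt_norm ℝ (EuclideanSpace ℝ (Fin n)) R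
    have := hR (h ▸ Set.mem_univ x)
    simp only [Metric.mem_closedBall, dist_zero_right] at this
    exact absurd this (not_le.mpr hx)
  have hfne : (frontier Ω).Nonempty := nonempty_frontier_iff.mpr ⟨hΩne, hΩu⟩
  set δf : EuclideanSpace ℝ (Fin n) → ℝ := fun x => Metric.infDist x (frontier Ω) with hδf
  have hδpos : ∀ x ∈ Ω, 0 < δf x := by
    intro x hx
    refine (isClosed_frontier.notMem_iff_infDist_pos hfne).mp ?_
    intro hxf
    rw [hΩo.frontier_eq] at hxf
    exact hxf.2 hx
  have hball : ∀ x ∈ Ω, Metric.ball x (δf x) ⊆ Ω := by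
    intro x hx
    obtain ⟨y, hyf, hyd⟩ := exists_mem_frontier_infDist_compl_eq_dist hx hΩu
    have h1 : δf x ≤ Metric.infDist x Ωᶜ := by
      rw [hyd]; exact Metric.infDist_le_dist_of_mem hyf
    exact (Metric.ball_subset_ball h1).trans Metric.ball_infDist_compl_subset
  -- the Lipschitz-type estimate
  set K : ℝ := (C₂ + C₃) * 3 ^ ((1:ℝ) - s) with hK
  have h3s : (0:ℝ) < 3 ^ ((1:ℝ) - s) := by positivity
  have hKpos : 0 < K := by positivity
  have hkey : ∀ x ∈ Ω, ∀ lam : ℝ, 1 < lam →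
      |v (lam • x) - v x| ≤ K * ‖x‖ * δf x ^ (s - 1) * (lam - 1) := by
    intro x hx lam hlam
    have hδx := hδpos x hx
    have hδnn : (0:ℝ) ≤ δf x ^ (s - 1) := Real.rpow_nonneg hδx.le _
    have hl1 : (0:ℝ) < lam - 1 := by linarith
    by_cases hx0 : x = 0
    · rw [hx0]
      simp only [smul_zero, sub_self, abs_zero, norm_zero, mul_zero, zero_mul, le_refl]
    have hxn : 0 < ‖x‖ := norm_pos_iff.mpr hx0
    have hnorm : ‖lam • x - x‖ = (lam - 1) * ‖x‖ := by
      have h : lam • x - x = (lam - 1) • x := by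
        rw [sub_smul, one_smul]
      rw [h, norm_smul, Real.norm_eq_abs, abs_of_pos hl1]
    by_cases hcase : lam - 1 ≤ δf x / (2 * ‖x‖)
    · -- interior case: use the gradient bound on a ball
      set r : ℝ := δf x * (2/3) with hr
      have hrpos : 0 < r := by positivity
      have hrδ : r < δf x := by rw [hr]; nlinarith
      have hsub : Metric.ball x r ⊆ Ω :=
        (Metric.ball_subset_ball hrδ.le).trans (hball x hx)
      have hlamx : lam • x ∈ Metric.ball x r := by
        rw [Metric.mem_ball, dist_eq_norm, hnorm]
        have h2 : (lam - 1) * ‖x‖ ≤ δf x / 2 := by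
          have h5 := mul_le_mul_of_nonneg_right hcase hxn.le
          have heq : δf x / (2 * ‖x‖) * ‖x‖ = δf x / 2 := by
            field_simp
          rw [heq] at h5
          exact h5
        rw [hr]; nlinarith
      have hxball : x ∈ Metric.ball x r := Metric.mem_ball_self hrpos
      have hbound : ∀ y ∈ Metric.ball x r,
          ‖fderiv ℝ v y‖ ≤ C₃ * 3 ^ ((1:ℝ) - s) * δf x ^ (s - 1) := by
        intro y hy
        have hyΩ : y ∈ Ω := hsub hy
        have hδy : δf x / 3 ≤ δf y := by
          have h1 : δf x ≤ δf y + dist x y := Metric.infDist_le_infDist_add_dist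
          have h2 : dist x y < r := by rw [dist_comm]; exact hy
          rw [hr] at h2; nlinarith
        have hδy3 : (0:ℝ) < δf x / 3 := by positivity
        have hgm : ‖fderiv ℝ v y‖ = ‖gradient v y‖ := by
          rw [show gradient v y
              = (InnerProductSpace.toDual ℝ _).symm (fderiv ℝ v y) from rfl,
            LinearIsometryEquiv.norm_map]
        calc ‖fderiv ℝ v y‖ = ‖gradient v y‖ := hgm
          _ ≤ C₃ * δf y ^ (s - 1) := hgrad y hyΩ
          _ ≤ C₃ * (δf x / 3) ^ (s - 1) :=
              mul_le_mul_of_nonneg_left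
                (Real.rpow_le_rpow_of_nonpos hδy3 hδy (by linarith)) hC₃.le
          _ = C₃ * 3 ^ ((1:ℝ) - s) * δf x ^ (s - 1) := by
              rw [Real.div_rpow hδx.le (by norm_num : (0:ℝ) ≤ 3),
                show s - 1 = -(1 - s) by ring,
                Real.rpow_neg (by norm_num : (0:ℝ) ≤ 3),
                Real.rpow_neg hδx.le]
              field_simp
      have hmvt := (convex_ball x r).norm_image_sub_le_of_norm_fderiv_le
        (fun y hy => hvd y (hsub hy)) hbound hxball hlamx
      rw [Real.norm_eq_abs, hnorm] at hmvt
      calc |v (lam • x) - v x|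
          ≤ C₃ * 3 ^ ((1:ℝ) - s) * δf x ^ (s - 1) * ((lam - 1) * ‖x‖) := hmvt
        _ = (C₃ * 3 ^ ((1:ℝ) - s)) * (‖x‖ * δf x ^ (s - 1) * (lam - 1)) := by
            ring
        _ ≤ K * (‖x‖ * δf x ^ (s - 1) * (lam - 1)) := by
            refine mul_le_mul_of_nonneg_right ?_
              (mul_nonneg (mul_nonneg (norm_nonneg x) hδnn) hl1.le)
            rw [hK]
            nlinarith
        _ = K * ‖x‖ * δf x ^ (s - 1) * (lam - 1) := by ring
    · -- boundary case: use the Hölder estimate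
      push_neg at hcase
      have hq : (0:ℝ) < δf x / (2 * ‖x‖) := by positivity
      have h2x : (0:ℝ) < 2 * ‖x‖ := by positivity
      have hHold : |v (lam • x) - v x| ≤ C₂ * ((lam - 1) * ‖x‖) ^ s := by
        have h := hvH (lam • x) x
        rwa [hnorm] at h
      have hsplit : ((lam - 1) * ‖x‖) ^ s
          = (lam - 1) * ((lam - 1) ^ (s - 1) * ‖x‖ ^ s) := by
        rw [Real.mul_rpow hl1.le hxn.le,
          show s = 1 + (s - 1) by ring, Real.rpow_add hl1, Real.rpow_one]
        ring_nf
      have hmono : (lam - 1) ^ (s - 1) ≤ (δf x / (2 * ‖x‖)) ^ (s - 1) :=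
        Real.rpow_le_rpow_of_nonpos hq hcase.le (by linarith)
      have hqval : (δf x / (2 * ‖x‖)) ^ (s - 1)
          = δf x ^ (s - 1) * (2 * ‖x‖) ^ ((1:ℝ) - s) := by
        rw [div_eq_mul_inv,
          Real.mul_rpow hδx.le (inv_nonneg.mpr h2x.le),
          Real.inv_rpow h2x.le, ← Real.rpow_neg h2x.le,
          show -(s - 1) = 1 - s by ring]
      have hxs : (0:ℝ) ≤ ‖x‖ ^ s := Real.rpow_nonneg (norm_nonneg x) _
      have hxpow : ‖x‖ ^ ((1:ℝ) - s) * ‖x‖ ^ s = ‖x‖ := by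
        rw [← Real.rpow_add hxn, show (1:ℝ) - s + s = 1 by ring, Real.rpow_one]
      calc |v (lam • x) - v x| ≤ C₂ * ((lam - 1) * ‖x‖) ^ s := hHold
        _ = C₂ * (lam - 1) * ((lam - 1) ^ (s - 1) * ‖x‖ ^ s) := by
            rw [hsplit]; ring
        _ ≤ C₂ * (lam - 1) * ((δf x / (2 * ‖x‖)) ^ (s - 1) * ‖x‖ ^ s) := by
            refine mul_le_mul_of_nonneg_left
              (mul_le_mul_of_nonneg_right hmono hxs) (by positivity)
        _ = C₂ * 2 ^ ((1:ℝ) - s) * (‖x‖ * δf x ^ (s - 1) * (lam - 1)) := by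
            rw [hqval, Real.mul_rpow (by norm_num : (0:ℝ) ≤ 2) (norm_nonneg x)]
            calc C₂ * (lam - 1) * (δf x ^ (s - 1)
                  * (2 ^ ((1:ℝ) - s) * ‖x‖ ^ ((1:ℝ) - s)) * ‖x‖ ^ s)
                = C₂ * 2 ^ ((1:ℝ) - s) * ((‖x‖ ^ ((1:ℝ) - s) * ‖x‖ ^ s)
                    * δf x ^ (s - 1) * (lam - 1)) := by ring
              _ = C₂ * 2 ^ ((1:ℝ) - s) * (‖x‖ * δf x ^ (s - 1) * (lam - 1)) := by
                  rw [hxpow]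
        _ ≤ K * (‖x‖ * δf x ^ (s - 1) * (lam - 1)) := by
            refine mul_le_mul_of_nonneg_right ?_
              (mul_nonneg (mul_nonneg (norm_nonneg x) hδnn) hl1.le)
            have h23 : (2:ℝ) ^ ((1:ℝ) - s) ≤ 3 ^ ((1:ℝ) - s) :=
              Real.rpow_le_rpow (by norm_num) (by norm_num) (by linarith)
            rw [hK]; nlinarith
        _ = K * ‖x‖ * δf x ^ (s - 1) * (lam - 1) := by ring
  -- continuity of v
  have hvc : Continuous v := by
    rw [continuous_iff_continuousAt]
    intro x
    have h1 : Tendsto (fun y => ‖y - x‖) (𝓝 x) (𝓝 0) := tendsto_norm_sub_self x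
    have h2 : Tendsto (fun t : ℝ => C₂ * t ^ s) (𝓝 0) (𝓝 0) := by
      have hc : ContinuousAt (fun t : ℝ => t ^ s) 0 :=
        Real.continuousAt_rpow_const 0 s (Or.inr hs0.le)
      have := (hc.tendsto).const_mul C₂
      simpa [Real.zero_rpow hs0.ne'] using this
    have h3 : Tendsto (fun y => C₂ * ‖y - x‖ ^ s) (𝓝 x) (𝓝 0) := h2.comp h1
    have h4 : Tendsto (fun y => v y - v x) (𝓝 x) (𝓝 0) := by
      refine squeeze_zero_norm (fun y => ?_) h3
      simpa [Real.norm_eq_abs] using hvH y x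
    have h5 := h4.add_const (v x)
    simpa [ContinuousAt, sub_add_cancel] using h5
  -- normalization of g and Ω
  obtain ⟨R, hRsub⟩ := hΩb.subset_closedBall 0
  have hxR : ∀ x ∈ Ω, ‖x‖ ≤ R := by
    intro x hx
    have := hRsub hx
    simpa [dist_zero_right] using this
  have hR0 : 0 ≤ R := by
    obtain ⟨x, hx⟩ := hΩne
    exact le_trans (norm_nonneg x) (hxR x hx)
  set M' : ℝ := max M 0 with hM'def
  have hM'0 : 0 ≤ M' := le_max_right _ _
  have hM' : ∀ x ∈ Ω, |g x| ≤ M' := fun x hx => le_trans (hgb x hx) (le_max_left _ _)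
  have hgm : AEStronglyMeasurable g (volume.restrict Ω) :=
    hgc.aestronglyMeasurable hΩo.measurableSet
  -- integrability of the integrands
  have hInt : ∀ lam : ℝ, IntegrableOn (fun x => v (lam • x) * g x) Ω volume := by
    intro lam
    have hm : AEStronglyMeasurable (fun x => v (lam • x) * g x) (volume.restrict Ω) :=
      ((hvc.comp (continuous_const_smul lam)).aestronglyMeasurable.restrict).mul hgm
    have hconst : IntegrableOn
        (fun _ : EuclideanSpace ℝ (Fin n) => (C₂ * (|lam| * R) ^ s + |v 0|) * M')
        Ω volume := integrableOn_const hΩb.measure_lt_top.ne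
    refine Integrable.mono' hconst hm ?_
    filter_upwards [self_mem_ae_restrict hΩo.measurableSet] with x hx
    have h1 : |v (lam • x)| ≤ C₂ * (|lam| * R) ^ s + |v 0| := by
      have h2 := hvH (lam • x) 0
      have h3 : ‖lam • x - 0‖ = |lam| * ‖x‖ := by
        simp [norm_smul, Real.norm_eq_abs]
      rw [h3] at h2
      have h4 : C₂ * (|lam| * ‖x‖) ^ s ≤ C₂ * (|lam| * R) ^ s := by
        refine mul_le_mul_of_nonneg_left
          (Real.rpow_le_rpow (by positivity)
            (mul_le_mul_of_nonneg_left (hxR x hx) (abs_nonneg lam)) hs0.le) hC₂.le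
      calc |v (lam • x)| ≤ |v (lam • x) - v 0| + |v 0| := by
            have := abs_sub_abs_le_abs_sub (v (lam • x)) (v 0)
            have := abs_add_le (v (lam • x) - v 0) (v 0)
            calc |v (lam • x)| = |v (lam • x) - v 0 + v 0| := by ring_nf
              _ ≤ |v (lam • x) - v 0| + |v 0| := abs_add_le _ _
        _ ≤ C₂ * (|lam| * ‖x‖) ^ s + |v 0| := by linarith
        _ ≤ C₂ * (|lam| * R) ^ s + |v 0| := by linarith
    have h5 : (0:ℝ) ≤ C₂ * (|lam| * R) ^ s + |v 0| := by positivity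
    rw [Real.norm_eq_abs, abs_mul]
    exact mul_le_mul h1 (hM' x hx) (abs_nonneg _) h5
  have hInt1 : IntegrableOn (fun x => v x * g x) Ω volume := by
    have := hInt 1
    simpa [one_smul] using this
  -- the difference quotients
  set q : ℝ → EuclideanSpace ℝ (Fin n) → ℝ :=
    fun lam x => (lam - 1)⁻¹ * (v (lam • x) * g x - v x * g x) with hq
  have hslope_eq : ∀ lam : ℝ,
      slope (fun l => ∫ x in Ω, v (l • x) * g x) 1 lam = ∫ x in Ω, q lam x := by
    intro lam
    rw [slope_def_field]
    have h2 : ∫ x in Ω, q lam x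
        = (lam - 1)⁻¹ * ((∫ x in Ω, v (lam • x) * g x) - ∫ x in Ω, v x * g x) := by
      simp only [hq]
      rw [MeasureTheory.integral_const_mul, integral_sub (hInt lam) hInt1]
    rw [h2, div_eq_inv_mul]
    simp only [one_smul]
  -- pointwise convergence of the difference quotients
  have htendQ : ∀ x ∈ Ω, Tendsto (fun lam => q lam x) (𝓝[>] (1:ℝ))
      (𝓝 (⟪x, gradient v x⟫ * g x)) := by
    intro x hx
    have h2 : HasDerivAt (fun l : ℝ => l • x) x 1 := by
      simpa using (hasDerivAt_id (1:ℝ)).smul_const x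
    have hF : HasFDerivAt v (fderiv ℝ v x) ((1:ℝ) • x) := by
      rw [one_smul]; exact (hvd x hx).hasFDerivAt
    have hdx : HasDerivAt (fun l : ℝ => v (l • x)) ((fderiv ℝ v x) x) 1 := by
      have h3 := hF.comp_hasDerivAt (1:ℝ) h2
      exact h3
    have hinner : (fderiv ℝ v x) x = ⟪x, gradient v x⟫ := by
      rw [real_inner_comm,
        show gradient v x = (InnerProductSpace.toDual ℝ _).symm (fderiv ℝ v x) from rfl,
        InnerProductSpace.toDual_symm_apply]
    have hslope := hasDerivAt_iff_tendsto_slope.mp hdx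
    have hmono : 𝓝[>] (1:ℝ) ≤ 𝓝[≠] (1:ℝ) :=
      nhdsWithin_mono _ (fun y hy => ne_of_gt hy)
    have h4 := (hslope.mono_left hmono).mul_const (g x)
    rw [hinner] at h4
    refine h4.congr' ?_
    filter_upwards [self_mem_nhdsWithin] with lam hlam
    have hlam1 : lam ≠ 1 := ne_of_gt hlam
    rw [slope_def_field, hq]
    simp only [one_smul]
    field_simp
  -- dominated convergence
  have hmain : Tendsto (fun lam => ∫ x in Ω, q lam x) (𝓝[>] (1:ℝ))
      (𝓝 (∫ x in Ω, ⟪x, gradient v x⟫ * g x)) := by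
    refine tendsto_integral_filter_of_dominated_convergence
      (fun x => K * R * M' * δf x ^ (s - 1)) ?_ ?_ ?_ ?_
    · filter_upwards with lam
      exact ((((hvc.comp (continuous_const_smul lam)).aestronglyMeasurable.restrict).mul
        hgm).sub ((hvc.aestronglyMeasurable.restrict).mul hgm)).const_mul _
    · filter_upwards [self_mem_nhdsWithin] with lam hlam
      filter_upwards [self_mem_ae_restrict hΩo.measurableSet] with x hx
      have hlam' : (1:ℝ) < lam := hlam
      have hl1 : (0:ℝ) < lam - 1 := by linarith
      have hδnn : (0:ℝ) ≤ δf x ^ (s - 1) := Real.rpow_nonneg (Metric.infDist_nonneg) _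
      have hk := hkey x hx lam hlam'
      have h1 : |v (lam • x) * g x - v x * g x| = |v (lam • x) - v x| * |g x| := by
        rw [← sub_mul, abs_mul]
      have h2 : ‖q lam x‖ = (lam - 1)⁻¹ * (|v (lam • x) - v x| * |g x|) := by
        rw [hq, Real.norm_eq_abs, abs_mul, abs_of_pos (inv_pos.mpr hl1), h1]
      rw [h2]
      have h3 : |v (lam • x) - v x| * |g x|
          ≤ (K * ‖x‖ * δf x ^ (s - 1) * (lam - 1)) * M' :=
        mul_le_mul hk (hM' x hx) (abs_nonneg _)
          (by positivity)
      calc (lam - 1)⁻¹ * (|v (lam • x) - v x| * |g x|)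
          ≤ (lam - 1)⁻¹ * ((K * ‖x‖ * δf x ^ (s - 1) * (lam - 1)) * M') :=
            mul_le_mul_of_nonneg_left h3 (inv_pos.mpr hl1).le
        _ = K * ‖x‖ * M' * δf x ^ (s - 1) := by
            have hne : lam - 1 ≠ 0 := ne_of_gt hl1
            field_simp
        _ ≤ K * R * M' * δf x ^ (s - 1) := by
            refine mul_le_mul_of_nonneg_right ?_ hδnn
            nlinarith [hxR x hx, mul_nonneg hKpos.le hM'0]
    · exact hδ.const_mul _
    · filter_upwards [self_mem_ae_restrict hΩo.measurableSet] with x hx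
      exact htendQ x hx
  -- conclusion
  rw [hasDerivWithinAt_iff_tendsto_slope]
  have hset : (Ioi (1:ℝ)) \ {1} = Ioi 1 :=
    diff_singleton_eq_self (by simp)
  rw [hset]
  exact hmain.congr (fun lam => (hslope_eq lam).symm)
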